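/- arXiv:1012.0947 — 2 statements merged into one kernel-verified Lean document; each statement's English description precedes it below -/
import Mathlib

section
/- Let B₂(x₁, x₂) = (2/9)(x₁² + 3x₂)^{3/2} + (2/9)x₁³ on {x₁ ≥ 0, x₂ > 0}. Then the Hessian entries are A = ∂²B₂/∂x₁² = 2(√(x₁²+3x₂) + x₁)²/(3√(x₁²+3x₂)), B = ∂²B₂/∂x₁∂x₂ = x₁/√(x₁²+3x₂), C = ∂²B₂/∂x₂² = 3/(2√(x₁²+3x₂)), and √(AC) - |B| = 1. -/
open Real

private lemma aux_lin (c a : ℝ) : HasDerivAt (fun b : ℝ => c + 3 * b) 3 a := by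
  simpa using ((hasDerivAt_id a).const_mul (3:ℝ)).const_add c

private lemma aux_quad (x₂ a : ℝ) : HasDerivAt (fun a' : ℝ => a' ^ 2 + 3 * x₂) (2 * a) a := by
  simpa using (hasDerivAt_pow 2 a).add_const (3 * x₂)

/-- Second partial derivatives (Hessian entries) of
`B₂(x₁,x₂) = (2/9)(x₁² + 3x₂)^{3/2} + (2/9)x₁³`, and the fact `√(AC) - |B| = 1`. -/
theorem stmt_5 (x₁ x₂ : ℝ) (hx₁ : 0 ≤ x₁) (hx₂ : 0 < x₂)
    (B₂ : ℝ → ℝ → ℝ)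
    (hB₂ : ∀ a b : ℝ, B₂ a b = (2 / 9) * (a ^ 2 + 3 * b) ^ ((3 : ℝ) / 2) + (2 / 9) * a ^ 3)
    (A B C : ℝ)
    (hA : A = 2 * (Real.sqrt (x₁ ^ 2 + 3 * x₂) + x₁) ^ 2 / (3 * Real.sqrt (x₁ ^ 2 + 3 * x₂)))
    (hB : B = x₁ / Real.sqrt (x₁ ^ 2 + 3 * x₂))
    (hC : C = 3 / (2 * Real.sqrt (x₁ ^ 2 + 3 * x₂))) :
    deriv (fun a => deriv (fun a' => B₂ a' x₂) a) x₁ = A ∧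
    deriv (fun b => deriv (fun a => B₂ a b) x₁) x₂ = B ∧
    deriv (fun b => deriv (fun b' => B₂ x₁ b') b) x₂ = C ∧
    Real.sqrt (A * C) - |B| = 1 := by
  set s : ℝ := Real.sqrt (x₁ ^ 2 + 3 * x₂) with hs
  have hpos : (0:ℝ) < x₁ ^ 2 + 3 * x₂ := by positivity
  have hs0 : 0 < s := Real.sqrt_pos.2 hpos
  have hs2 : s ^ 2 = x₁ ^ 2 + 3 * x₂ := Real.sq_sqrt hpos.le
  -- first partial in a, valid for all b with x₁²+3b > 0 and all a
  have hda : ∀ b : ℝ, 0 < 3 * b → ∀ a : ℝ,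
      HasDerivAt (fun a' => B₂ a' b)
        ((2/3) * a * Real.sqrt (a ^ 2 + 3 * b) + (2/3) * a ^ 2) a := by
    intro b hb a
    have hposa : (0:ℝ) < a ^ 2 + 3 * b := by positivity
    have h1 : HasDerivAt (fun a' : ℝ => a' ^ 2 + 3 * b) (2 * a) a := aux_quad b a
    have h2 := (h1.rpow_const (p := (3:ℝ)/2) (Or.inl hposa.ne')).const_mul (2/9 : ℝ)
    have h3 := (hasDerivAt_pow 3 a).const_mul (2/9 : ℝ)
    have h4 := h2.add h3
    have : (fun a' => B₂ a' b)
        = fun a' : ℝ => (2/9) * (a' ^ 2 + 3 * b) ^ ((3:ℝ)/2) + (2/9) * a' ^ 3 := by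
      funext a'; exact hB₂ a' b
    rw [this]
    refine h4.congr_deriv ?_
    rw [Real.sqrt_eq_rpow]
    norm_num
    ring
  -- first partial in b, valid when x₁² + 3 b > 0 (for the fixed x₁), any a
  have hdb : ∀ a b : ℝ, 0 < a ^ 2 + 3 * b →
      HasDerivAt (fun b' => B₂ a b') (Real.sqrt (a ^ 2 + 3 * b)) b := by
    intro a b hposb
    have h1 : HasDerivAt (fun b' : ℝ => a ^ 2 + 3 * b') 3 b := aux_lin _ b
    have h2 := (h1.rpow_const (p := (3:ℝ)/2) (Or.inl hposb.ne')).const_mul (2/9 : ℝ)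
    have h3 := h2.add_const ((2/9) * a ^ 3)
    have : (fun b' => B₂ a b')
        = fun b' : ℝ => (2/9) * (a ^ 2 + 3 * b') ^ ((3:ℝ)/2) + (2/9) * a ^ 3 := by
      funext b'; exact hB₂ a b'
    rw [this]
    refine h3.congr_deriv ?_
    rw [Real.sqrt_eq_rpow]
    norm_num
    ring
  refine ⟨?_, ?_, ?_, ?_⟩
  · -- A
    have heq : (fun a => deriv (fun a' => B₂ a' x₂) a)
        = fun a => (2/3) * a * Real.sqrt (a ^ 2 + 3 * x₂) + (2/3) * a ^ 2 := by
      funext a; exact (hda x₂ (by linarith) a).deriv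
    rw [heq, hA]
    have hsq : HasDerivAt (fun a : ℝ => Real.sqrt (a ^ 2 + 3 * x₂))
        (2 * x₁ / (2 * s)) x₁ := (aux_quad x₂ x₁).sqrt (by rw [← hs2]; positivity)
    have hid : HasDerivAt (fun a : ℝ => (2/3) * a) (2/3) x₁ := by
      simpa using (hasDerivAt_id x₁).const_mul ((2:ℝ)/3)
    have h2 := (hid.mul hsq).add ((hasDerivAt_pow 2 x₁).const_mul (2/3 : ℝ))
    rw [(show HasDerivAt (fun a : ℝ => (2/3) * a * Real.sqrt (a ^ 2 + 3 * x₂) + (2/3) * a ^ 2) _ x₁ from h2).deriv, ← hs]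
    field_simp
    ring
  · -- B
    have heq : (fun b => deriv (fun a => B₂ a b) x₁)
        =ᶠ[nhds x₂] fun b => (2/3) * x₁ * Real.sqrt (x₁ ^ 2 + 3 * b) + (2/3) * x₁ ^ 2 := by
      have hopen : ∀ᶠ b in nhds x₂, 0 < 3 * b := by
        have : Set.Ioi (0:ℝ) ∈ nhds x₂ := Ioi_mem_nhds hx₂
        filter_upwards [this] with b hb
        have : (0:ℝ) < b := hb
        linarith
      filter_upwards [hopen] with b hb
      exact (hda b hb x₁).deriv
    rw [heq.deriv_eq, hB]
    have hsq : HasDerivAt (fun b : ℝ => Real.sqrt (x₁ ^ 2 + 3 * b))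
        (3 / (2 * s)) x₂ := (aux_lin _ x₂).sqrt (by rw [← hs2]; positivity)
    have h1 := (hsq.const_mul ((2/3) * x₁ : ℝ)).add_const ((2/3) * x₁ ^ 2)
    rw [h1.deriv]
    field_simp
  · -- C
    have heq : (fun b => deriv (fun b' => B₂ x₁ b') b)
        =ᶠ[nhds x₂] fun b => Real.sqrt (x₁ ^ 2 + 3 * b) := by
      have hopen : ∀ᶠ b in nhds x₂, 0 < x₁ ^ 2 + 3 * b := by
        have : Set.Ioi (0:ℝ) ∈ nhds x₂ := Ioi_mem_nhds hx₂
        filter_upwards [this] with b hb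
        have : (0:ℝ) < b := hb
        positivity
      filter_upwards [hopen] with b hb
      exact (hdb x₁ b hb).deriv
    rw [heq.deriv_eq, hC]
    have hsq : HasDerivAt (fun b : ℝ => Real.sqrt (x₁ ^ 2 + 3 * b))
        (3 / (2 * s)) x₂ := (aux_lin _ x₂).sqrt (by rw [← hs2]; positivity)
    exact hsq.deriv
  · -- √(AC) - |B| = 1
    have hAC : A * C = ((s + x₁) / s) ^ 2 := by
      rw [hA, hC]
      field_simp
    rw [hAC, Real.sqrt_sq (by positivity), hB,
      abs_of_nonneg (by positivity)]
    field_simp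
    ring
end

section
/- Let 1 < q ≤ 2 ≤ p with 1/p + 1/q = 1, t > 0, u ≥ 0, v > 0 with t = (p^{1/p}/q)t^{1/q}u + (p^{1/q}/p)t^{1/p}v. Set τ = (p·p^{1/p}·t^{1/q})/(q·p^{1/q}·t^{1/p}) and B_v/v = (p^{1/q}t^{1/p} - u)/v. Then B_v/v - 1/τ + 2/τ ≥ p/τ, i.e., B_v/v + 1/τ ≥ p/τ. -/
/-- Inequality (Bvba): `B_v/v + 1/τ ≥ p/τ` for the implicit Bellman function. -/
theorem stmt_16 (p q t u v : ℝ) (hq : 1 < q) (hq2 : q ≤ 2) (hp2 : 2 ≤ p)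
    (hpq : 1 / p + 1 / q = 1) (ht : 0 < t) (hu : 0 ≤ u) (hv : 0 < v)
    (himpl : t = (p ^ (1 / p) / q) * t ^ (1 / q) * u + (p ^ (1 / q) / p) * t ^ (1 / p) * v)
    (τ : ℝ) (hτ : τ = (p * p ^ (1 / p) * t ^ (1 / q)) / (q * p ^ (1 / q) * t ^ (1 / p))) :
    p / τ ≤ (p ^ (1 / q) * t ^ (1 / p) - u) / v + 1 / τ := by
  have hp0 : (0:ℝ) < p := lt_of_lt_of_le two_pos hp2
  have hq0 : (0:ℝ) < q := lt_trans one_pos hq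
  have ha : (0:ℝ) < p ^ (1/p) := Real.rpow_pos_of_pos hp0 _
  have hb : (0:ℝ) < p ^ (1/q) := Real.rpow_pos_of_pos hp0 _
  have hr : (0:ℝ) < t ^ (1/q) := Real.rpow_pos_of_pos ht _
  have hs : (0:ℝ) < t ^ (1/p) := Real.rpow_pos_of_pos ht _
  have hab : p ^ (1/p) * p ^ (1/q) = p := by
    rw [← Real.rpow_add hp0, hpq, Real.rpow_one]
  have hrs : t ^ (1/q) * t ^ (1/p) = t := by
    rw [← Real.rpow_add ht, show 1/q + 1/p = 1 by linarith, Real.rpow_one]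
  have hτ0 : 0 < τ := by rw [hτ]; positivity
  have hpq' : p + q = p * q := by
    field_simp at hpq; linarith
  have hτbs : τ * (q * p ^ (1/q) * t ^ (1/p)) = p * p ^ (1/p) * t ^ (1/q) := by
    rw [hτ, div_mul_cancel₀]
    positivity
  have himpl' : p * q * t = p * p ^ (1/p) * t ^ (1/q) * u + q * p ^ (1/q) * t ^ (1/p) * v := by
    have h := himpl
    field_simp at h
    linear_combination h
  have key : p ^ (1/p) * t ^ (1/q) = τ * u + v := by
    have hd : q * p ^ (1/q) * t ^ (1/p) ≠ 0 := by positivity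
    rw [hτ]
    field_simp
    linear_combination (q * t ^ (1/q) * t ^ (1/p)) * hab + (q * p) * hrs + himpl'
  have h2 : (p - 1) * v ≤ (p ^ (1/q) * t ^ (1/p) - u) * τ := by
    nlinarith [key, hτbs, hpq', mul_nonneg hτ0.le hu, hp2, hq2]
  have h3 : (p - 1) / τ ≤ (p ^ (1/q) * t ^ (1/p) - u) / v := by
    rw [div_le_div_iff₀ hτ0 hv]; linarith
  have h4 : p / τ = (p - 1) / τ + 1 / τ := by ring
  linarith
end
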